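/- In any Strong Stackelberg Equilibrium where players may use history-dependent strategies, the leader's expected payoff is greater than or equal to the leader's expected payoff in any Strong Stackelberg Equilibrium where players are restricted to history-independent (memoryless) strategies. -/
import Mathlib


/-- The current node of a history (its last element), with `root` as default. -/
def cur {V : Type*} (root : V) (h : List V) : V := h.getLastD root

/-- A valid history: starts at the root and follows edges of the game graph. -/
def IsHist {V : Type*} (children : V → Finset V) (root : V) (h : List V) : Prop :=
  h.head? = some root ∧ h.Chain' (fun a b => b ∈ children a)

/-- Expected utility (w.r.t. leaf utilities `u`) of the continuation from history `h`
under the combined behavioral profile `τ`, computed with `fuel` steps of lookahead. -/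
def EU {V : Type*} [DecidableEq V] (children : V → Finset V) (root : V) (u : V → ℝ)
    (τ : List V → V → ℝ) : ℕ → List V → ℝ
  | 0, h => u (cur root h)
  | n + 1, h =>
      if children (cur root h) = ∅ then u (cur root h)
      else ∑ w ∈ children (cur root h), τ h w * EU children root u τ n (h ++ [w])

/-- A valid behavioral strategy: nonnegative and summing to one over the children. -/
def ValidStrat {V : Type*} (children : V → Finset V) (root : V)
    (σ : List V → V → ℝ) : Prop :=
  (∀ h w, 0 ≤ σ h w) ∧
  ∀ h : List V, (children (cur root h)).Nonempty →
    ∑ w ∈ children (cur root h), σ h w = 1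

/-- The combined profile: the owner of the current node decides. -/
def combine {V : Type*} (owner : V → Bool) (root : V)
    (σ1 σ2 : List V → V → ℝ) : List V → V → ℝ :=
  fun h w => if owner (cur root h) = true then σ1 h w else σ2 h w

/-- The expected utility (w.r.t. leaf utilities `u`) of a strategy profile, from the root. -/
def payoff {V : Type*} [Fintype V] [DecidableEq V] (children : V → Finset V)
    (root : V) (owner : V → Bool) (u : V → ℝ) (σ1 σ2 : List V → V → ℝ) : ℝ :=
  EU children root u (combine owner root σ1 σ2) (Fintype.card V) [root]

/-- `σ2` is a best response of the follower to the leader's strategy `σ1`. -/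
def BestResponse {V : Type*} [Fintype V] [DecidableEq V] (children : V → Finset V)
    (root : V) (owner : V → Bool) (u2 : V → ℝ) (σ1 σ2 : List V → V → ℝ) : Prop :=
  ValidStrat children root σ2 ∧
  ∀ σ2', ValidStrat children root σ2' →
    payoff children root owner u2 σ1 σ2' ≤ payoff children root owner u2 σ1 σ2

/-- Strong Stackelberg Equilibrium: `σ2` is a best response to `σ1`, and the pair
maximizes the leader's expected utility among all such pairs. -/
def IsSSE {V : Type*} [Fintype V] [DecidableEq V] (children : V → Finset V)
    (root : V) (owner : V → Bool) (u1 u2 : V → ℝ) (σ1 σ2 : List V → V → ℝ) : Prop :=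
  ValidStrat children root σ1 ∧
  BestResponse children root owner u2 σ1 σ2 ∧
  ∀ σ1' σ2', ValidStrat children root σ1' →
    BestResponse children root owner u2 σ1' σ2' →
    payoff children root owner u1 σ1' σ2' ≤ payoff children root owner u1 σ1 σ2

/-- A strategy is memoryless (history-independent) if it depends only on the current node. -/
def Memoryless {V : Type*} (root : V) (σ : List V → V → ℝ) : Prop :=
  ∀ h h' : List V, cur root h = cur root h' → ∀ w, σ h w = σ h' w

section Aux

variable {V : Type*} [Fintype V] [DecidableEq V]

lemma cur_single (root v : V) : cur root [v] = v := rfl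

lemma cur_append (root : V) (h : List V) (w : V) : cur root (h ++ [w]) = w := by
  simp [cur, List.getLastD_eq_getLast?]

/-- Backward-induction best-response value against a memoryless leader strategy `t`. -/
noncomputable def BRval (children : V → Finset V) (owner : V → Bool) (u2 : V → ℝ)
    (t : V → V → ℝ) : ℕ → V → ℝ
  | 0, v => u2 v
  | n + 1, v =>
      if hc : (children v).Nonempty then
        if owner v = true then ∑ w ∈ children v, t v w * BRval children owner u2 t n w
        else (children v).sup' hc (BRval children owner u2 t n)
      else u2 v

lemma BRval_leaf (children : V → Finset V) (owner : V → Bool) (u2 : V → ℝ)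
    (t : V → V → ℝ) (n : ℕ) (v : V) (hc : ¬ (children v).Nonempty) :
    BRval children owner u2 t n v = u2 v := by
  cases n <;> simp [BRval, hc]

open Classical in
/-- The number of strict descendants of a node. -/
noncomputable def rank (children : V → Finset V) (v : V) : ℕ :=
  (Finset.univ.filter (fun x => Relation.TransGen (fun a b => b ∈ children a) v x)).card

lemma rank_child_lt {children : V → Finset V}
    (hacyc : ∀ v, ¬ Relation.TransGen (fun a b => b ∈ children a) v v)
    {v w : V} (hw : w ∈ children v) : rank children w < rank children v := by
  classical
  apply Finset.card_lt_card
  constructor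
  · intro x hx
    simp only [Finset.mem_filter, Finset.mem_univ, true_and] at hx ⊢
    exact (Relation.TransGen.single hw).trans hx
  · intro hsub
    have hwmem : w ∈ Finset.univ.filter
        (fun x => Relation.TransGen (fun a b => b ∈ children a) v x) := by
      simp only [Finset.mem_filter, Finset.mem_univ, true_and]
      exact Relation.TransGen.single hw
    have := hsub hwmem
    simp only [Finset.mem_filter, Finset.mem_univ, true_and] at this
    exact hacyc w this

lemma rank_zero_no_children {children : V → Finset V} {v : V}
    (h : rank children v = 0) : ¬ (children v).Nonempty := by
  classical
  rintro ⟨w, hw⟩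
  have : w ∈ Finset.univ.filter
      (fun x => Relation.TransGen (fun a b => b ∈ children a) v x) := by
    simp only [Finset.mem_filter, Finset.mem_univ, true_and]
    exact Relation.TransGen.single hw
  have := Finset.card_pos.mpr ⟨w, this⟩
  rw [rank] at h
  omega

/-- Fuel stability of `BRval`. -/
lemma BRval_stable {children : V → Finset V}
    (hacyc : ∀ v, ¬ Relation.TransGen (fun a b => b ∈ children a) v v)
    (owner : V → Bool) (u2 : V → ℝ) (t : V → V → ℝ) :
    ∀ k v, rank children v ≤ k → ∀ m n, rank children v ≤ m → rank children v ≤ n →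
      BRval children owner u2 t m v = BRval children owner u2 t n v := by
  intro k
  induction k with
  | zero =>
      intro v hv m n _ _
      have hc : ¬ (children v).Nonempty := rank_zero_no_children (Nat.le_zero.mp hv)
      rw [BRval_leaf _ _ _ _ _ _ hc, BRval_leaf _ _ _ _ _ _ hc]
  | succ k ih =>
      intro v hv m n hm hn
      by_cases hc : (children v).Nonempty
      · obtain ⟨w₀, hw₀⟩ := id hc
        have hr1 : 1 ≤ rank children v :=
          Nat.one_le_iff_ne_zero.mpr (fun h => rank_zero_no_children h ⟨w₀, hw₀⟩)
        obtain ⟨m', rfl⟩ : ∃ m', m = m' + 1 := ⟨m - 1, by omega⟩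
        obtain ⟨n', rfl⟩ : ∃ n', n = n' + 1 := ⟨n - 1, by omega⟩
        have key : ∀ w ∈ children v,
            BRval children owner u2 t m' w = BRval children owner u2 t n' w := by
          intro w hw
          have hlt := rank_child_lt hacyc hw
          exact ih w (by omega) m' n' (by omega) (by omega)
        simp only [BRval, dif_pos hc]
        by_cases ho : owner v = true
        · simp only [ho, if_true]
          exact Finset.sum_congr rfl (fun w hw => by rw [key w hw])
        · simp only [ho, if_false]
          exact Finset.sup'_congr hc rfl key
      · rw [BRval_leaf _ _ _ _ _ _ hc, BRval_leaf _ _ _ _ _ _ hc]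

/-- Any (history-dependent) follower strategy achieves at most the backward-induction
value against a memoryless leader strategy. -/
lemma EU_le_BRval {children : V → Finset V} {root : V} {owner : V → Bool} {u2 : V → ℝ}
    {τ1 σ2' : List V → V → ℝ}
    (hτ1v : ValidStrat children root τ1) (hτ1m : Memoryless root τ1)
    (hσv : ValidStrat children root σ2') :
    ∀ n h, EU children root u2 (combine owner root τ1 σ2') n h ≤
      BRval children owner u2 (fun v w => τ1 [v] w) n (cur root h) := by
  intro n
  induction n with
  | zero => intro h; simp [EU, BRval]
  | succ n ih =>
      intro h
      set v := cur root h with hv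
      by_cases hc : (children v).Nonempty
      · have hne : children v ≠ ∅ := Finset.nonempty_iff_ne_empty.mp hc
        rw [EU, BRval]
        simp only [← hv, dif_pos hc, if_neg (Finset.nonempty_iff_ne_empty.mp hc)]
        by_cases ho : owner v = true
        · simp only [ho, if_true, combine, ← hv]
          apply Finset.sum_le_sum
          intro w hw
          have h1 : τ1 h w = τ1 [v] w := hτ1m h [v] (by rw [cur_single]) w
          rw [h1]
          apply mul_le_mul_of_nonneg_left _ (hτ1v.1 [v] w)
          have := ih (h ++ [w])
          rwa [cur_append] at this
        · simp only [ho, if_false, combine, ← hv]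
          calc ∑ w ∈ children v, σ2' h w * EU children root u2
                  (combine owner root τ1 σ2') n (h ++ [w])
              ≤ ∑ w ∈ children v, σ2' h w *
                  ((children v).sup' hc
                    (BRval children owner u2 (fun v w => τ1 [v] w) n)) := by
                apply Finset.sum_le_sum
                intro w hw
                apply mul_le_mul_of_nonneg_left _ (hσv.1 h w)
                calc EU children root u2 (combine owner root τ1 σ2') n (h ++ [w])
                    ≤ BRval children owner u2 (fun v w => τ1 [v] w) n
                        (cur root (h ++ [w])) := ih (h ++ [w])
                  _ = BRval children owner u2 (fun v w => τ1 [v] w) n w := by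
                        rw [cur_append]
                  _ ≤ _ := Finset.le_sup' _ hw
            _ = ((children v).sup' hc
                  (BRval children owner u2 (fun v w => τ1 [v] w) n)) := by
                rw [← Finset.sum_mul]
                have hsum : ∑ w ∈ children v, σ2' h w = 1 := by
                  have := hσv.2 h (by rw [← hv]; exact hc)
                  rwa [← hv] at this
                rw [hsum, one_mul]
      · have hce : children v = ∅ := Finset.not_nonempty_iff_eq_empty.mp hc
        rw [EU, BRval]
        simp [← hv, hce, hc]


/-- An argmax child of `v` for the value function `f` (defaulting to `root`). -/
noncomputable def pick {V : Type*} [DecidableEq V] (children : V → Finset V)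
    (f : V → ℝ) (root v : V) : V :=
  if hc : (children v).Nonempty then
    Classical.choose (Finset.exists_max_image (children v) f hc)
  else root

lemma pick_mem {V : Type*} [DecidableEq V] {children : V → Finset V} {f : V → ℝ}
    {root v : V} (hc : (children v).Nonempty) : pick children f root v ∈ children v := by
  rw [pick, dif_pos hc]
  exact (Classical.choose_spec (Finset.exists_max_image (children v) f hc)).1

lemma pick_max {V : Type*} [DecidableEq V] {children : V → Finset V} {f : V → ℝ}
    {root v : V} (hc : (children v).Nonempty) :
    ∀ w ∈ children v, f w ≤ f (pick children f root v) := by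
  rw [pick, dif_pos hc]
  exact (Classical.choose_spec (Finset.exists_max_image (children v) f hc)).2

/-- The greedy memoryless strategy achieves the backward-induction value. -/
lemma EU_greedy_eq {V : Type*} [Fintype V] [DecidableEq V]
    {children : V → Finset V} {root : V} {owner : V → Bool} {u2 : V → ℝ}
    {τ1 : List V → V → ℝ}
    (hacyc : ∀ v, ¬ Relation.TransGen (fun a b => b ∈ children a) v v)
    (hτ1v : ValidStrat children root τ1) (hτ1m : Memoryless root τ1) :
    ∀ n h, rank children (cur root h) ≤ n →
      EU children root u2 (combine owner root τ1
        (fun h w => if w = pick children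
          (BRval children owner u2 (fun v w => τ1 [v] w) (Fintype.card V))
          root (cur root h) then 1 else 0)) n h =
      BRval children owner u2 (fun v w => τ1 [v] w) n (cur root h) := by
  set t : V → V → ℝ := fun v w => τ1 [v] w with ht
  set f : V → ℝ := BRval children owner u2 t (Fintype.card V) with hf
  intro n
  induction n with
  | zero =>
      intro h hr
      simp [EU, BRval]
  | succ n ih =>
      intro h hr
      set v := cur root h with hv
      by_cases hc : (children v).Nonempty
      · rw [EU, BRval]
        simp only [← hv, dif_pos hc, if_neg (Finset.nonempty_iff_ne_empty.mp hc)]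
        by_cases ho : owner v = true
        · simp only [ho, if_true, combine, ← hv]
          apply Finset.sum_congr rfl
          intro w hw
          have h1 : τ1 h w = τ1 [v] w := hτ1m h [v] (by rw [cur_single]) w
          rw [h1]
          congr 1
          have := ih (h ++ [w]) (by
            rw [cur_append]
            have := rank_child_lt hacyc hw
            omega)
          rwa [cur_append] at this
        · simp only [ho, if_false, combine, ← hv, Bool.false_eq_true, ite_false]
          have hpick : pick children f root v ∈ children v := pick_mem hc
          have hstep : ∀ w ∈ children v, rank children w ≤ n := by
            intro w hw
            have := rank_child_lt hacyc hw
            omega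
          have hsum : ∑ w ∈ children v,
              (if w = pick children f root v then (1:ℝ) else 0) *
                EU children root u2 (combine owner root τ1
                  (fun h w => if w = pick children f root (cur root h) then 1 else 0))
                  n (h ++ [w]) =
              EU children root u2 (combine owner root τ1
                (fun h w => if w = pick children f root (cur root h) then 1 else 0))
                n (h ++ [pick children f root v]) := by
            rw [Finset.sum_eq_single (pick children f root v)]
            · simp
            · intro w hw hne
              simp [hne]
            · intro habs
              exact absurd hpick habs
          rw [hsum]
          have hEUp := ih (h ++ [pick children f root v]) (by
            rw [cur_append]; exact hstep _ hpick)
          rw [cur_append] at hEUp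
          rw [hEUp]
          -- now show BRval n (pick) = sup' of BRval n over children
          have hstab : ∀ w ∈ children v, BRval children owner u2 t n w = f w := by
            intro w hw
            rw [hf]
            exact BRval_stable hacyc owner u2 t (rank children w) w le_rfl n
              (Fintype.card V) (hstep w hw)
              (by
                classical
                rw [rank]
                exact (Finset.card_filter_le _ _).trans (by simp))
          apply le_antisymm
          · rw [hstab _ hpick]
            exact (Finset.le_sup' _ hpick).trans
              (le_of_eq (Finset.sup'_congr hc rfl (fun w hw => (hstab w hw).symm)))
          · apply Finset.sup'_le
            intro w hw
            rw [hstab _ hw, hstab _ hpick]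
            exact pick_max hc w hw
      · have hce : children v = ∅ := Finset.not_nonempty_iff_eq_empty.mp hc
        rw [EU, BRval]
        simp [← hv, hce, hc]


end Aux

/-- Proposition 1: the leader's payoff in any SSE with history-dependent strategies is at
least the leader's payoff in any SSE where both players are restricted to memoryless
strategies (with best responses taken within the memoryless class). -/
theorem stmt11 {V : Type*} [Fintype V] [DecidableEq V]
    (children : V → Finset V) (root : V) (owner : V → Bool) (u1 u2 : V → ℝ)
    (hacyc : ∀ v, ¬ Relation.TransGen (fun a b => b ∈ children a) v v)
    (σ1 σ2 τ1 τ2 : List V → V → ℝ)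
    (hSSE : IsSSE children root owner u1 u2 σ1 σ2)
    (hτ1v : ValidStrat children root τ1) (hτ1m : Memoryless root τ1)
    (hτ2v : ValidStrat children root τ2) (hτ2m : Memoryless root τ2)
    (hτBR : ∀ σ2', ValidStrat children root σ2' → Memoryless root σ2' →
      payoff children root owner u2 τ1 σ2' ≤ payoff children root owner u2 τ1 τ2)
    (hτmax : ∀ τ1' τ2', ValidStrat children root τ1' → Memoryless root τ1' →
      ValidStrat children root τ2' → Memoryless root τ2' →
      (∀ σ2', ValidStrat children root σ2' → Memoryless root σ2' →
        payoff children root owner u2 τ1' σ2' ≤ payoff children root owner u2 τ1' τ2') →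
      payoff children root owner u1 τ1' τ2' ≤ payoff children root owner u1 τ1 τ2) :
    payoff children root owner u1 τ1 τ2 ≤ payoff children root owner u1 σ1 σ2 := by
  classical
  set t : V → V → ℝ := fun v w => τ1 [v] w with ht
  set f : V → ℝ := BRval children owner u2 t (Fintype.card V) with hf
  set g : List V → V → ℝ :=
    fun h w => if w = pick children f root (cur root h) then 1 else 0 with hg
  have hgv : ValidStrat children root g := by
    constructor
    · intro h w
      rw [hg]
      dsimp only
      split <;> norm_num
    · intro h hne
      rw [hg]
      dsimp only
      rw [Finset.sum_eq_single (pick children f root (cur root h))]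
      · simp
      · intro w _ hw; simp [hw]
      · intro habs; exact absurd (pick_mem hne) habs
  have hgm : Memoryless root g := by
    intro h h' he w
    rw [hg]
    dsimp only
    rw [he]
  have hrank : rank children root ≤ Fintype.card V := by
    rw [rank]
    exact (Finset.card_filter_le _ _).trans (by simp)
  have hgval : payoff children root owner u2 τ1 g = f root := by
    rw [payoff, hf]
    have := EU_greedy_eq (owner := owner) (u2 := u2) hacyc hτ1v hτ1m
      (Fintype.card V) [root] (by rw [cur_single]; exact hrank)
    rw [cur_single] at this
    exact this
  have hBR : BestResponse children root owner u2 τ1 τ2 := by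
    refine ⟨hτ2v, fun σ2' hσv => ?_⟩
    have h1 : payoff children root owner u2 τ1 σ2' ≤ f root := by
      rw [payoff, hf]
      have := EU_le_BRval (owner := owner) (u2 := u2) hτ1v hτ1m hσv
        (Fintype.card V) [root]
      rwa [cur_single] at this
    calc payoff children root owner u2 τ1 σ2' ≤ f root := h1
      _ = payoff children root owner u2 τ1 g := hgval.symm
      _ ≤ payoff children root owner u2 τ1 τ2 := hτBR g hgv hgm
  exact hSSE.2.2 τ1 τ2 hτ1v hBR
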